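/- Let {x_k} be a normalized complete minimal system with biorthogonal {x_k*}. The subsets σ ⊆ ℕ for which the mixed system {x_k}_{k∈σ} ∪ {x_k*}_{k∈σ^c} is complete are exactly the points of continuity of the map σ ↦ P_σ from 𝔓(ℕ) (product topology) to the projections with the strong operator topology. In particular, this map is a homeomorphism onto its image if and only if {x_k} is hereditarily complete. -/

import Mathlib

open Filter Topology

noncomputable section

variable {H : Type*} [NormedAddCommGroup H] [InnerProductSpace ℂ H] [CompleteSpace H]

/-- Closed linear span of a set of vectors. -/
def clSpan (s : Set H) : Submodule ℂ H := (Submodule.span ℂ s).topologicalClosure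

instance (s : Set H) : CompleteSpace (clSpan s) :=
  (Submodule.isClosed_topologicalClosure _).completeSpace_coe

/-- Orthogonal projection onto the closed linear span of `s`, as a map `H → H`. -/
def projS (s : Set H) : H →L[ℂ] H :=
  (clSpan s).subtypeL ∘L (clSpan s).orthogonalProjection

/-- The system `x` is complete: its closed linear span is all of `H`. -/
def IsCompleteSystem (x : ℕ → H) : Prop := clSpan (Set.range x) = ⊤

/-- The system `x` is minimal: no vector lies in the closed span of the others. -/
def IsMinimalSystem (x : ℕ → H) : Prop :=
  ∀ k, x k ∉ clSpan (x '' {j | j ≠ k})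

/-- `y` is biorthogonal to `x`. -/
def IsBiorthogonal (x y : ℕ → H) : Prop :=
  ∀ k j, (inner ℂ (x k) (y j) : ℂ) = if k = j then 1 else 0

lemma mem_clSpan_of_mem {s : Set H} {v : H} (h : v ∈ s) : v ∈ clSpan s :=
  (Submodule.le_topologicalClosure _) (Submodule.subset_span h)

lemma clSpan_mono {s t : Set H} (h : s ⊆ t) : clSpan s ≤ clSpan t :=
  Submodule.topologicalClosure_mono (Submodule.span_mono h)

lemma clSpan_orthogonal (s : Set H) :
    (clSpan s)ᗮ = (Submodule.span ℂ s)ᗮ := by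
  rw [clSpan, ← Submodule.orthogonal_orthogonal_eq_closure,
    Submodule.triorthogonal_eq_orthogonal]

lemma mem_orthogonal_clSpan {s : Set H} {v : H}
    (h : ∀ u ∈ s, (inner ℂ u v : ℂ) = 0) : v ∈ (clSpan s)ᗮ := by
  rw [clSpan_orthogonal, Submodule.mem_orthogonal]
  intro u hu
  induction hu using Submodule.span_induction with
  | mem u hu => exact h u hu
  | zero => simp
  | add u₁ u₂ h₁ h₂ hp₁ hp₂ => rw [inner_add_left, hp₁, hp₂, add_zero]
  | smul c u hu hp => rw [inner_smul_left, hp, mul_zero]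

lemma projS_apply_of_mem {s : Set H} {v : H} (h : v ∈ clSpan s) : projS s v = v := by
  have : ((clSpan s).orthogonalProjection v : H) = v := Submodule.starProjection_eq_self_iff.mpr h
  simpa [projS] using this

lemma projS_apply_mem (s : Set H) (v : H) : projS s v ∈ clSpan s :=
  ((clSpan s).orthogonalProjection v).2

lemma projS_apply_of_orth {s : Set H} {v : H}
    (h : ∀ u ∈ s, (inner ℂ u v : ℂ) = 0) : projS s v = 0 := by
  have := Submodule.orthogonalProjectionOnto_apply_of_mem_orthogonal
    (mem_orthogonal_clSpan h)
  simp [projS, this]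

lemma norm_projS_apply_le (s : Set H) (v : H) : ‖projS s v‖ ≤ ‖v‖ := by
  have h1 : ‖projS s v‖ = ‖(clSpan s).orthogonalProjection v‖ := rfl
  calc ‖projS s v‖ = ‖(clSpan s).orthogonalProjection v‖ := rfl
    _ ≤ ‖(clSpan s).orthogonalProjection‖ * ‖v‖ :=
        ((clSpan s).orthogonalProjection).le_opNorm v
    _ ≤ 1 * ‖v‖ := by
        gcongr
        exact Submodule.orthogonalProjectionOnto_norm_le _
    _ = ‖v‖ := one_mul _

/-- Key finite-defect lemma: an annihilator of the mixed system lies in the closed span of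
`x` over `σ ∪ [n, ∞)`. -/
lemma ann_mem_clSpan (x y : ℕ → H) (hc : IsCompleteSystem x) (hbi : IsBiorthogonal x y)
    (a : ℕ → Bool) (w : H)
    (hw1 : ∀ k, a k = true → (inner ℂ (x k) w : ℂ) = 0)
    (hw2 : ∀ k, a k = false → (inner ℂ (y k) w : ℂ) = 0) (n : ℕ) :
    w ∈ clSpan (x '' {k | (if k < n then a k else true) = true}) := by
  set K := clSpan (x '' {k | (if k < n then a k else true) = true}) with hK
  have hKc : Kᗮᗮ = K := Submodule.orthogonal_orthogonal K
  rw [← hKc, Submodule.mem_orthogonal]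
  intro u hu
  have hxu : ∀ k, (k < n → a k = true) → (inner ℂ (x k) u : ℂ) = 0 := by
    intro k hk
    refine Submodule.inner_right_of_mem_orthogonal
      (mem_clSpan_of_mem (Set.mem_image_of_mem x ?_)) hu
    simp only [Set.mem_setOf_eq]
    split
    · exact hk ‹_›
    · rfl
  set S := (Finset.range n).filter (fun k => a k = false) with hS
  set u' := u - ∑ k ∈ S, (inner ℂ (x k) u : ℂ) • y k with hu'
  have hx' : ∀ j, (inner ℂ (x j) u' : ℂ) = 0 := by
    intro j
    have hsum : ∑ k ∈ S, (inner ℂ (x k) u : ℂ) * (inner ℂ (x j) (y k) : ℂ)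
        = if j ∈ S then (inner ℂ (x j) u : ℂ) else 0 := by
      rw [Finset.sum_congr rfl (fun k _ => by rw [hbi j k])]
      simp only [mul_ite, mul_one, mul_zero]
      exact Finset.sum_ite_eq S j (fun k => (inner ℂ (x k) u : ℂ))
    simp only [hu', inner_sub_right, inner_sum, inner_smul_right, hsum]
    by_cases hj : j ∈ S
    · simp [hj]
    · rw [if_neg hj, sub_zero]
      refine hxu j ?_
      intro hjn
      by_contra hfalse
      exact hj (Finset.mem_filter.mpr ⟨Finset.mem_range.mpr hjn,
        by simpa using hfalse⟩)
  have hu'0 : u' = 0 := by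
    have h1 : u' ∈ (clSpan (Set.range x))ᗮ := by
      refine mem_orthogonal_clSpan ?_
      rintro _ ⟨j, rfl⟩
      exact hx' j
    rw [hc, Submodule.top_orthogonal_eq_bot] at h1
    simpa using h1
  have hu_eq : u = ∑ k ∈ S, (inner ℂ (x k) u : ℂ) • y k := by
    have := sub_eq_zero.mp hu'0
    exact this
  rw [hu_eq, sum_inner]
  refine Finset.sum_eq_zero fun k hk => ?_
  rw [inner_smul_left, hw2 k (Finset.mem_filter.mp hk).2, mul_zero]

/-- Identifying `𝔓(ℕ)` with `ℕ → Bool` (product topology) and giving the projections the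
strong operator topology (the topology induced from `H → H` with the product topology):
the subsets `σ` with complete mixed system are exactly the points of continuity of
`φ : σ ↦ P_σ`; and `φ` is a homeomorphism onto its image (an embedding) iff the system is
hereditarily complete. -/
theorem continuity_points_and_embedding [TopologicalSpace.SeparableSpace H]
    (x y : ℕ → H) (hc : IsCompleteSystem x) (hmin : IsMinimalSystem x)
    (hbi : IsBiorthogonal x y) (hnorm : ∀ k, ‖x k‖ = 1) :
    (∀ a : ℕ → Bool,
        clSpan (x '' {k | a k = true} ∪ y '' {k | a k = true}ᶜ) = ⊤ ↔
          ContinuousAt (fun b : ℕ → Bool => fun v : H => projS (x '' {k | b k = true}) v) a) ∧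
    ((∀ N : Set ℕ, clSpan (x '' N ∪ y '' Nᶜ) = ⊤) ↔
      IsEmbedding (fun b : ℕ → Bool => fun v : H => projS (x '' {k | b k = true}) v)) := by
  set φ : (ℕ → Bool) → H → H :=
    fun b : ℕ → Bool => fun v : H => projS (x '' {k | b k = true}) v with hφ
  have part1 : ∀ a : ℕ → Bool,
      clSpan (x '' {k | a k = true} ∪ y '' {k | a k = true}ᶜ) = ⊤ ↔ ContinuousAt φ a := by
    intro a
    constructor
    · -- completeness implies continuity
      intro htop
      rw [continuousAt_pi]
      intro v
      -- local constancy on the span of the mixed system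
      have key : ∀ v' ∈ Submodule.span ℂ (x '' {k | a k = true} ∪ y '' {k | a k = true}ᶜ),
          ∀ᶠ b in 𝓝 a, projS (x '' {k | b k = true}) v' = projS (x '' {k | a k = true}) v' := by
        intro v' hv'
        induction hv' using Submodule.span_induction with
        | mem g hg =>
          rcases hg with ⟨k, hk, rfl⟩ | ⟨k, hk, rfl⟩
          · -- g = x k with a k = true
            have hopen : {b : ℕ → Bool | b k = true} ∈ 𝓝 a := by
              have h0 : {b : ℕ → Bool | b k = true} = (fun b : ℕ → Bool => b k) ⁻¹' {true} :=
                rfl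
              have : IsOpen {b : ℕ → Bool | b k = true} := by
                rw [h0]
                exact (continuous_apply (A := fun _ : ℕ => Bool) k).isOpen_preimage ({true} : Set Bool)
                  (isOpen_discrete _)
              exact this.mem_nhds hk
            filter_upwards [hopen] with b hb
            rw [projS_apply_of_mem (mem_clSpan_of_mem (Set.mem_image_of_mem x hb)),
              projS_apply_of_mem (mem_clSpan_of_mem (Set.mem_image_of_mem x hk))]
          · -- g = y k with a k ≠ true
            have hk' : a k = false := by
              simpa using hk
            have hopen : {b : ℕ → Bool | b k = false} ∈ 𝓝 a := by
              have h0 : {b : ℕ → Bool | b k = false} = (fun b : ℕ → Bool => b k) ⁻¹' {false} :=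
                rfl
              have : IsOpen {b : ℕ → Bool | b k = false} := by
                rw [h0]
                exact (continuous_apply (A := fun _ : ℕ => Bool) k).isOpen_preimage ({false} : Set Bool)
                  (isOpen_discrete _)
              exact this.mem_nhds hk'
            have horth : ∀ (b : ℕ → Bool), b k = false →
                ∀ u ∈ x '' {j | b j = true}, (inner ℂ u (y k) : ℂ) = 0 := by
              rintro b hb _ ⟨j, hj, rfl⟩
              have hjk : j ≠ k := by
                intro h; rw [h] at hj; rw [hj] at hb; exact Bool.noConfusion hb
              rw [hbi j k, if_neg hjk]
            filter_upwards [hopen] with b hb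
            rw [projS_apply_of_orth (horth b hb), projS_apply_of_orth (horth a hk')]
        | zero => simp
        | add u₁ u₂ h₁ h₂ hp₁ hp₂ =>
          filter_upwards [hp₁, hp₂] with b hb₁ hb₂
          rw [map_add, map_add, hb₁, hb₂]
        | smul c u hu hp =>
          filter_upwards [hp] with b hb
          rw [map_smul, map_smul, hb]
      -- density of the span
      have hdense : Dense ((Submodule.span ℂ
          (x '' {k | a k = true} ∪ y '' {k | a k = true}ᶜ) : Submodule ℂ H) : Set H) :=
        Submodule.dense_iff_topologicalClosure_eq_top.mpr htop
      rw [ContinuousAt, Metric.tendsto_nhds]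
      intro ε hε
      obtain ⟨v', hv'mem, hv'close⟩ := Metric.mem_closure_iff.mp
        (hdense.closure_eq ▸ Set.mem_univ v) (ε / 3) (by positivity)
      filter_upwards [key v' hv'mem] with b hb
      have h1 : ‖projS (x '' {k | b k = true}) (v - v')‖ ≤ ‖v - v'‖ :=
        norm_projS_apply_le _ _
      have h2 : ‖projS (x '' {k | a k = true}) (v' - v)‖ ≤ ‖v' - v‖ :=
        norm_projS_apply_le _ _
      have hvv' : ‖v - v'‖ < ε / 3 := by
        rw [← dist_eq_norm]; exact hv'close
      have hv'v : ‖v' - v‖ < ε / 3 := by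
        rw [← dist_eq_norm, dist_comm]; exact hv'close
      have hdecomp : projS (x '' {k | b k = true}) v - projS (x '' {k | a k = true}) v
          = projS (x '' {k | b k = true}) (v - v') + projS (x '' {k | a k = true}) (v' - v) := by
        rw [map_sub, map_sub, hb]; abel
      rw [dist_eq_norm]
      calc ‖projS (x '' {k | b k = true}) v - projS (x '' {k | a k = true}) v‖
          = ‖projS (x '' {k | b k = true}) (v - v')
              + projS (x '' {k | a k = true}) (v' - v)‖ := by rw [hdecomp]
        _ ≤ ‖projS (x '' {k | b k = true}) (v - v')‖
              + ‖projS (x '' {k | a k = true}) (v' - v)‖ := norm_add_le _ _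
        _ ≤ ‖v - v'‖ + ‖v' - v‖ := add_le_add h1 h2
        _ < ε / 3 + ε / 3 := by exact add_lt_add hvv' hv'v
        _ < ε := by linarith
    · -- continuity implies completeness
      intro hcont
      by_contra hK
      obtain ⟨w, hwmem, hw0⟩ := (Submodule.ne_bot_iff _).mp
        (fun h => hK (Submodule.orthogonal_eq_bot_iff.mp h))
      have hw1 : ∀ k, a k = true → (inner ℂ (x k) w : ℂ) = 0 := fun k hk =>
        Submodule.inner_right_of_mem_orthogonal
          (mem_clSpan_of_mem (Set.mem_union_left _ (Set.mem_image_of_mem x hk))) hwmem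
      have hw2 : ∀ k, a k = false → (inner ℂ (y k) w : ℂ) = 0 := fun k hk =>
        Submodule.inner_right_of_mem_orthogonal
          (mem_clSpan_of_mem (Set.mem_union_right _
            (Set.mem_image_of_mem y (by simp [hk])))) hwmem
      set b : ℕ → (ℕ → Bool) := fun n k => if k < n then a k else true with hb
      have htend : Tendsto b atTop (𝓝 a) := by
        rw [tendsto_pi_nhds]
        intro k
        refine tendsto_const_nhds.congr' ?_
        filter_upwards [eventually_ge_atTop (k + 1)] with n hn
        simp only [hb]
        rw [if_pos (Nat.lt_of_lt_of_le (Nat.lt_succ_self k) hn)]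
      have hcomp : Tendsto (fun n => φ (b n) w) atTop (𝓝 (φ a w)) :=
        ((continuous_apply w).tendsto (φ a)).comp (hcont.tendsto.comp htend)
      have hφbn : ∀ n, φ (b n) w = w := fun n =>
        projS_apply_of_mem (ann_mem_clSpan x y hc hbi a w hw1 hw2 n)
      have hφa : φ a w = 0 := by
        refine projS_apply_of_orth ?_
        rintro _ ⟨k, hk, rfl⟩
        exact hw1 k hk
      have : Tendsto (fun _ : ℕ => w) atTop (𝓝 (0 : H)) := by
        rw [← hφa]
        exact hcomp.congr fun n => hφbn n
      exact hw0 (tendsto_nhds_unique tendsto_const_nhds this)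
  refine ⟨part1, ?_, ?_⟩
  · -- hereditary completeness implies embedding
    intro hall
    have hcont : Continuous φ := continuous_iff_continuousAt.mpr fun a =>
      (part1 a).mp (hall {k | a k = true})
    have hinj : Function.Injective φ := by
      intro b b' hbb'
      by_contra hne
      obtain ⟨k, hk⟩ : ∃ k, b k ≠ b' k := Function.ne_iff.mp hne
      -- wlog b k = true and b' k = false
      have main : ∀ c c' : ℕ → Bool, c k = true → c' k = false → φ c ≠ φ c' := by
        intro c c' hck hc'k hcc'
        have h1 : φ c (x k) = x k :=
          projS_apply_of_mem (mem_clSpan_of_mem (Set.mem_image_of_mem x hck))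
        have h2 : x k ∈ clSpan (x '' {j | c' j = true}) := by
          rw [← h1, hcc']
          exact projS_apply_mem _ _
        have hsub : x '' {j | c' j = true} ⊆ x '' {j | j ≠ k} := by
          refine Set.image_mono ?_
          intro j hj
          intro hjk
          rw [hjk] at hj
          rw [hj] at hc'k
          exact Bool.noConfusion hc'k
        exact hmin k (clSpan_mono hsub h2)
      cases hbk : b k with
      | true =>
        have hb'k : b' k = false := by
          cases hb'k : b' k with
          | true => exact absurd (hbk.trans hb'k.symm) hk
          | false => rfl
        exact main b b' hbk hb'k hbb'
      | false =>
        have hb'k : b' k = true := by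
          cases hb'k : b' k with
          | false => exact absurd (hbk.trans hb'k.symm) hk
          | true => rfl
        exact main b' b hb'k hbk hbb'.symm
    exact (hcont.isClosedEmbedding hinj).toIsEmbedding
  · -- embedding implies hereditary completeness
    intro hemb N
    classical
    set a : ℕ → Bool := fun k => decide (k ∈ N) with ha
    have hset : {k | a k = true} = N := by
      ext k
      simp [ha]
    have := (part1 a).mpr (hemb.continuous.continuousAt)
    rwa [hset] at this
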